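/- Suppose there is no π ∈ S with Zπ = w and Pen(π) = 0. Then for any δ > 0 the modulus problem ω(δ) = sup{2β : β‖w − Zπ‖₂ ≤ δ/2, β·Pen(π) ≤ C, β ≥ 0, π ∈ S} has a maximizer (β*, π*) with β* > 0 and ‖w − Zπ*‖₂ > 0. -/

import Mathlib

open Matrix

noncomputable def l2norm {n : ℕ} (x : Fin n → ℝ) : ℝ := Real.sqrt (∑ i, x i ^ 2)

noncomputable def toE {n : ℕ} (x : Fin n → ℝ) : EuclideanSpace ℝ (Fin n) := WithLp.toLp 2 x

lemma l2norm_eq {n : ℕ} (x : Fin n → ℝ) : l2norm x = ‖toE x‖ := by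
  rw [EuclideanSpace.norm_eq]
  simp only [l2norm, toE, WithLp.ofLp_toLp, Real.norm_eq_abs, sq_abs]

lemma toE_sub {n : ℕ} (x y : Fin n → ℝ) : toE (x - y) = toE x - toE y := by simp [toE]
lemma toE_smul {n : ℕ} (c : ℝ) (x : Fin n → ℝ) : toE (c • x) = c • toE x := by simp [toE]
lemma toE_inj {n : ℕ} {x y : Fin n → ℝ} (h : toE x = toE y) : x = y := WithLp.toLp_injective 2 h

lemma l2norm_nonneg {n : ℕ} (x : Fin n → ℝ) : 0 ≤ l2norm x := by
  rw [l2norm_eq]; exact norm_nonneg _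

lemma l2norm_eq_zero_iff {n : ℕ} (x : Fin n → ℝ) : l2norm x = 0 ↔ x = 0 := by
  rw [l2norm_eq, norm_eq_zero]
  exact ⟨fun h => toE_inj (h.trans (by simp [toE])), fun h => by rw [h]; simp [toE]⟩

lemma l2norm_smul {n : ℕ} (c : ℝ) (x : Fin n → ℝ) : l2norm (c • x) = |c| * l2norm x := by
  rw [l2norm_eq, l2norm_eq, toE_smul, norm_smul, Real.norm_eq_abs]

lemma l2norm_rev {n : ℕ} (x y : Fin n → ℝ) : l2norm (x - y) = l2norm (y - x) := by
  rw [l2norm_eq, l2norm_eq, toE_sub, toE_sub, norm_sub_rev]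

lemma l2norm_sub_le {n : ℕ} (x y : Fin n → ℝ) : l2norm x - l2norm y ≤ l2norm (x - y) := by
  rw [l2norm_eq, l2norm_eq, l2norm_eq, toE_sub]
  exact norm_sub_norm_le _ _

lemma continuous_l2norm {n : ℕ} : Continuous (l2norm (n := n)) :=
  Real.continuous_sqrt.comp (continuous_finset_sum _ fun i _ => (continuous_apply i).pow 2)

set_option maxHeartbeats 1000000

/-- If there is no `π ∈ S` with `Zπ = w` and `Pen π = 0`, then for any `δ > 0` the modulus
problem `ω(δ) = sup{2β : β‖w − Zπ‖₂ ≤ δ/2, β·Pen(π) ≤ C, β ≥ 0, π ∈ S}` has a maximizer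
`(β*, π*)` with `β* > 0` and `‖w − Zπ*‖₂ > 0`. -/
theorem modulus_problem_has_maximizer {n k : ℕ} (S : Submodule ℝ (Fin k → ℝ))
    (Pen : (Fin k → ℝ) → ℝ)
    (htri : ∀ x y, x ∈ S → y ∈ S → Pen (x + y) ≤ Pen x + Pen y)
    (hhom : ∀ (c : ℝ) (x), x ∈ S → Pen (c • x) = |c| * Pen x)
    (hcont : Continuous Pen)
    (Z : Matrix (Fin n) (Fin k) ℝ) (w : Fin n → ℝ) (hw : w ≠ 0)
    (C : ℝ) (hC : 0 < C)
    (hno : ¬ ∃ π ∈ S, Z.mulVec π = w ∧ Pen π = 0)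
    (δ : ℝ) (hδ : 0 < δ) :
    ∃ β : ℝ, ∃ π ∈ S, 0 < β ∧
      β * l2norm (w - Z.mulVec π) ≤ δ / 2 ∧ β * Pen π ≤ C ∧
      0 < l2norm (w - Z.mulVec π) ∧
      ∀ β' : ℝ, ∀ π' ∈ S, 0 ≤ β' →
        β' * l2norm (w - Z.mulVec π') ≤ δ / 2 → β' * Pen π' ≤ C →
        2 * β' ≤ 2 * β := by
  classical
  have hPen0 : Pen 0 = 0 := by
    have := hhom 0 0 S.zero_mem; simpa using this
  have hPenNonneg : ∀ x, x ∈ S → 0 ≤ Pen x := by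
    intro x hx
    have h1 := htri x (-x) hx (S.neg_mem hx)
    have h2 : Pen (-x) = Pen x := by
      have := hhom (-1) x hx; simpa using this
    have h3 : Pen (x + -x) = 0 := by rw [add_neg_cancel, hPen0]
    linarith
  set f : (Fin k → ℝ) → ℝ := fun π => l2norm (w - Z.mulVec π) with hfdef
  set q : (Fin k → ℝ) → ℝ := fun π => max ((2/δ) * l2norm (Z.mulVec π)) (Pen π / C) with hqdef
  set g : (Fin k → ℝ) → ℝ := fun π => max ((2/δ) * f π) (Pen π / C) with hgdef
  have hcontf : Continuous f := by
    apply continuous_l2norm.comp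
    exact continuous_const.sub (Z.mulVecLin.continuous_of_finiteDimensional)
  have hcontZ : Continuous fun π : Fin k → ℝ => Z.mulVec π :=
    Z.mulVecLin.continuous_of_finiteDimensional
  have hcontg : Continuous g := ((continuous_const.mul hcontf).max (hcont.div_const C))
  have hcontq : Continuous q :=
    ((continuous_const.mul (continuous_l2norm.comp hcontZ)).max (hcont.div_const C))
  -- the kernel N
  let N : Submodule ℝ (Fin k → ℝ) :=
  { carrier := {v | v ∈ S ∧ Z.mulVec v = 0 ∧ Pen v = 0}
    add_mem' := by
      rintro a b ⟨haS, haZ, haP⟩ ⟨hbS, hbZ, hbP⟩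
      refine ⟨S.add_mem haS hbS, ?_, ?_⟩
      · rw [Matrix.mulVec_add, haZ, hbZ, add_zero]
      · have h1 := htri a b haS hbS
        have h2 := hPenNonneg _ (S.add_mem haS hbS)
        linarith
    zero_mem' := by
      refine ⟨S.zero_mem, ?_, hPen0⟩
      simp [Matrix.mulVec_zero]
    smul_mem' := by
      rintro c a ⟨haS, haZ, haP⟩
      refine ⟨S.smul_mem c haS, ?_, ?_⟩
      · rw [Matrix.mulVec_smul, haZ, smul_zero]
      · rw [hhom c a haS, haP, mul_zero] }
  have hNS : ∀ v, v ∈ N → v ∈ S := fun v hv => hv.1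
  -- complement of N inside S
  obtain ⟨W', hW'⟩ := Submodule.exists_isCompl (N.comap S.subtype)
  set W : Submodule ℝ (Fin k → ℝ) := W'.map S.subtype with hWdef
  have hWS : ∀ u, u ∈ W → u ∈ S := by
    rintro u ⟨y, hy, rfl⟩; exact y.2
  have hdecomp : ∀ π, π ∈ S → ∃ v ∈ N, ∃ u ∈ W, π = v + u := by
    intro π hπ
    have hmem : (⟨π, hπ⟩ : S) ∈ (N.comap S.subtype) ⊔ W' := by
      rw [hW'.sup_eq_top]; trivial
    obtain ⟨v, hv, u, hu, huv⟩ := Submodule.mem_sup.mp hmem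
    refine ⟨v.1, hv, u.1, Submodule.mem_map_of_mem hu, ?_⟩
    have := congrArg Subtype.val huv
    simpa using this.symm
  have hWN : ∀ x, x ∈ W → x ∈ N → x = 0 := by
    rintro x ⟨y, hy, rfl⟩ hxN
    have hyN : y ∈ N.comap S.subtype := hxN
    have : y ∈ (N.comap S.subtype) ⊓ W' := ⟨hyN, hy⟩
    rw [hW'.inf_eq_bot, Submodule.mem_bot] at this
    rw [this]; exact map_zero _
  -- invariance of g under N translation
  have hPeninv : ∀ v, v ∈ N → ∀ u, u ∈ S → Pen (v + u) = Pen u := by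
    intro v hv u hu
    have hvS := hNS v hv
    have h1 : Pen (v + u) ≤ Pen u := by
      have := htri v u hvS hu; rw [hv.2.2] at this; linarith
    have hnegv : Pen (-v) = 0 := by
      have := hhom (-1) v hvS; simp [hv.2.2] at this; simpa using this
    have h2 : Pen u ≤ Pen (v + u) := by
      have h3 := htri (-v) (v + u) (S.neg_mem hvS) (S.add_mem hvS hu)
      rw [hnegv, neg_add_cancel_left] at h3; linarith
    linarith
  have hginv : ∀ v, v ∈ N → ∀ u, u ∈ S → g (v + u) = g u := by
    intro v hv u hu
    have hZ : Z.mulVec (v + u) = Z.mulVec u := by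
      rw [Matrix.mulVec_add, hv.2.1, zero_add]
    simp only [hgdef, hfdef, hZ, hPeninv v hv u hu]
  -- q is nonneg on S and zero iff in N
  have hqnonneg : ∀ u, u ∈ S → 0 ≤ q u := by
    intro u hu
    exact le_trans (div_nonneg (hPenNonneg u hu) hC.le) (le_max_right _ _)
  have hqpos : ∀ u, u ∈ W → u ≠ 0 → 0 < q u := by
    intro u huW hu0
    rcases lt_or_eq_of_le (hqnonneg u (hWS u huW)) with h | h
    · exact h
    · exfalso
      have hA : (2/δ) * l2norm (Z.mulVec u) ≤ 0 := le_of_le_of_eq (le_max_left _ _) h.symm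
      have hB : Pen u / C ≤ 0 := le_of_le_of_eq (le_max_right _ _) h.symm
      have hZ0 : l2norm (Z.mulVec u) = 0 := by
        have := l2norm_nonneg (Z.mulVec u)
        nlinarith [div_pos (by norm_num : (0:ℝ) < 2) hδ]
      have hP0 : Pen u = 0 := by
        have := hPenNonneg u (hWS u huW)
        have := (div_nonneg this hC.le)
        have : Pen u / C = 0 := le_antisymm hB this
        field_simp at this; simpa using this
      exact hu0 (hWN u huW ⟨hWS u huW, (l2norm_eq_zero_iff _).mp hZ0, hP0⟩)
  -- homogeneity of q
  have hqhom : ∀ (t : ℝ), 0 ≤ t → ∀ u, u ∈ S → q (t • u) = t * q u := by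
    intro t ht u hu
    have h1 : l2norm (Z.mulVec (t • u)) = t * l2norm (Z.mulVec u) := by
      rw [Matrix.mulVec_smul, l2norm_smul, abs_of_nonneg ht]
    have h2 : Pen (t • u) = t * Pen u := by rw [hhom t u hu, abs_of_nonneg ht]
    simp only [hqdef, h1, h2]
    rw [mul_max_of_nonneg _ _ ht]
    ring_nf
  -- coercivity constant on W
  have hcoer : ∃ c : ℝ, 0 < c ∧ ∀ u, u ∈ W → c * ‖u‖ ≤ q u := by
    by_cases hWb : ∀ u, u ∈ W → u = (0 : Fin k → ℝ)
    · refine ⟨1, one_pos, fun u hu => ?_⟩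
      rw [hWb u hu]
      simp only [hqdef, norm_zero, mul_zero, one_mul]
      have : Z.mulVec (0 : Fin k → ℝ) = 0 := Matrix.mulVec_zero Z
      rw [this, (l2norm_eq_zero_iff (0 : Fin n → ℝ)).mpr rfl, hPen0]
      simp
    · push_neg at hWb
      obtain ⟨u0, hu0W, hu00⟩ := hWb
      set K : Set (Fin k → ℝ) := (W : Set (Fin k → ℝ)) ∩ Metric.sphere 0 1 with hKdef
      have hKne : K.Nonempty := by
        refine ⟨‖u0‖⁻¹ • u0, W.smul_mem _ hu0W, ?_⟩
        simp only [Metric.mem_sphere, dist_zero_right]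
        exact norm_smul_inv_norm hu00
      have hKcpt : IsCompact K :=
        (isCompact_sphere (0 : Fin k → ℝ) 1).inter_left
          (Submodule.closed_of_finiteDimensional W)
      obtain ⟨u1, hu1K, hu1min⟩ := hKcpt.exists_isMinOn hKne hcontq.continuousOn
      have hu1W : u1 ∈ W := hu1K.1
      have hu1n : ‖u1‖ = 1 := by
        have := hu1K.2; simpa [Metric.mem_sphere, dist_zero_right] using this
      have hu10 : u1 ≠ 0 := by
        intro h; rw [h, norm_zero] at hu1n; norm_num at hu1n
      refine ⟨q u1, hqpos u1 hu1W hu10, fun u hu => ?_⟩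
      by_cases hu0' : u = 0
      · rw [hu0', norm_zero, mul_zero]
        exact hqnonneg 0 S.zero_mem
      · have hn : (0 : ℝ) < ‖u‖ := norm_pos_iff.mpr hu0'
        have hmemK : ‖u‖⁻¹ • u ∈ K := by
          refine ⟨W.smul_mem _ hu, ?_⟩
          simp only [Metric.mem_sphere, dist_zero_right]
          exact norm_smul_inv_norm hu0'
        have h1 : q u1 ≤ q (‖u‖⁻¹ • u) := hu1min hmemK
        rw [hqhom _ (inv_nonneg.mpr hn.le) u (hWS u hu)] at h1
        calc q u1 * ‖u‖ ≤ (‖u‖⁻¹ * q u) * ‖u‖ := by nlinarith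
          _ = q u := by field_simp
  obtain ⟨c, hc, hcoer⟩ := hcoer
  -- lower bound of g by q
  set R : ℝ := (2/δ) * l2norm w with hRdef
  have hwpos : 0 < l2norm w := by
    rcases lt_or_eq_of_le (l2norm_nonneg w) with h | h
    · exact h
    · exact absurd ((l2norm_eq_zero_iff w).mp h.symm) hw
  have hRpos : 0 < R := mul_pos (div_pos two_pos hδ) hwpos
  have hqg : ∀ u, u ∈ S → q u ≤ g u + R := by
    intro u hu
    apply max_le
    · have h1 : l2norm (Z.mulVec u) - l2norm w ≤ l2norm (Z.mulVec u - w) := l2norm_sub_le _ _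
      have h2 : l2norm (Z.mulVec u - w) = f u := l2norm_rev _ _
      have h3 : (2/δ) * f u ≤ g u := le_max_left _ _
      have hpos : (0:ℝ) < 2/δ := div_pos two_pos hδ
      nlinarith
    · have h3 : Pen u / C ≤ g u := le_max_right _ _
      linarith
  -- the compact sublevel set
  set B : Set (Fin k → ℝ) := (W : Set (Fin k → ℝ)) ∩ {u | g u ≤ R} with hBdef
  have hg0 : g 0 = R := by
    simp only [hgdef, hfdef]
    rw [Matrix.mulVec_zero, sub_zero, hPen0]
    simp only [zero_div]
    exact max_eq_left (by positivity)
  have hBne : B.Nonempty := ⟨0, W.zero_mem, by simp only [Set.mem_setOf_eq, hg0]; exact le_refl R⟩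
  have hBcl : IsClosed B :=
    (Submodule.closed_of_finiteDimensional W).inter (isClosed_le hcontg continuous_const)
  have hBsub : B ⊆ Metric.closedBall 0 (2 * R / c) := by
    rintro u ⟨huW, hug⟩
    have h1 : q u ≤ g u + R := hqg u (hWS u huW)
    have h2 : c * ‖u‖ ≤ q u := hcoer u huW
    have : g u ≤ R := hug
    simp only [Metric.mem_closedBall, dist_zero_right]
    rw [le_div_iff₀ hc]
    nlinarith
  have hBcpt : IsCompact B :=
    (isCompact_closedBall (0 : Fin k → ℝ) (2 * R / c)).of_isClosed_subset hBcl hBsub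
  obtain ⟨π₀, hπ₀B, hπ₀min⟩ := hBcpt.exists_isMinOn hBne hcontg.continuousOn
  have hπ₀W : π₀ ∈ W := hπ₀B.1
  have hπ₀S : π₀ ∈ S := hWS _ hπ₀W
  set m : ℝ := g π₀ with hmdef
  have hmR : m ≤ R := by
    have := hπ₀min (show (0:Fin k → ℝ) ∈ B from ⟨W.zero_mem, by simp [hg0]⟩)
    simpa [hg0] using this
  -- m is the min over all of S
  have hminS : ∀ π, π ∈ S → m ≤ g π := by
    intro π hπ
    obtain ⟨v, hvN, u, huW, rfl⟩ := hdecomp π hπ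
    rw [hginv v hvN u (hWS u huW)]
    by_cases hcase : g u ≤ R
    · exact hπ₀min ⟨huW, hcase⟩
    · push_neg at hcase; linarith
  have hmpos : 0 < m := by
    rcases lt_or_eq_of_le (le_trans (div_nonneg (hPenNonneg π₀ hπ₀S) hC.le)
      (le_max_right ((2/δ) * f π₀) (Pen π₀ / C))) with h | h
    · exact h
    · exfalso
      have hA : (2/δ) * f π₀ ≤ 0 := le_of_le_of_eq (le_max_left _ _) h.symm
      have hB' : Pen π₀ / C ≤ 0 := le_of_le_of_eq (le_max_right _ _) h.symm
      have hf0 : f π₀ = 0 := by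
        have := l2norm_nonneg (w - Z.mulVec π₀)
        have hpos : (0:ℝ) < 2/δ := div_pos two_pos hδ
        nlinarith
      have hP0 : Pen π₀ = 0 := by
        have h1 := hPenNonneg π₀ hπ₀S
        have h2 := (div_le_iff₀ hC).mp hB'
        linarith
      have : w - Z.mulVec π₀ = 0 := (l2norm_eq_zero_iff _).mp hf0
      exact hno ⟨π₀, hπ₀S, by rw [← sub_eq_zero]; rw [← neg_sub]; simp [this], hP0⟩
  -- the minimizer has f > 0
  have hfπ₀ : 0 < f π₀ := by
    rcases lt_or_eq_of_le (l2norm_nonneg (w - Z.mulVec π₀)) with h | h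
    · exact h
    · exfalso
      have hf0 : f π₀ = 0 := h.symm
      have hweq : w = Z.mulVec π₀ := by
        have := (l2norm_eq_zero_iff _).mp hf0
        have := sub_eq_zero.mp this; exact this
      have hmP : m = Pen π₀ / C := by
        have : (2/δ) * f π₀ = 0 := by rw [hf0, mul_zero]
        rw [hmdef]; simp only [hgdef]
        rw [this]
        exact max_eq_right (div_nonneg (hPenNonneg π₀ hπ₀S) hC.le)
      set ε : ℝ := min (1/2) (δ * m / (4 * l2norm w)) with hεdef
      have hεpos : 0 < ε := lt_min (by norm_num) (by positivity)
      have hεle : ε ≤ 1/2 := min_le_left _ _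
      have hεle2 : ε ≤ δ * m / (4 * l2norm w) := min_le_right _ _
      set t : ℝ := 1 - ε with htdef
      have ht0 : 0 < t := by simp only [htdef]; linarith
      have ht1 : t < 1 := by simp only [htdef]; linarith
      have htmem : t • π₀ ∈ S := S.smul_mem t hπ₀S
      have hfle : f (t • π₀) = ε * l2norm w := by
        simp only [hfdef]
        rw [Matrix.mulVec_smul, ← hweq]
        have hsub : w - t • w = ε • w := by
          rw [htdef, sub_smul, one_smul, sub_sub_cancel]
        rw [hsub, l2norm_smul, abs_of_nonneg hεpos.le]
      have h1 : (2/δ) * f (t • π₀) ≤ m / 2 := by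
        rw [hfle]
        have h2 : ε * l2norm w ≤ δ * m / 4 := by
          have := mul_le_mul_of_nonneg_right hεle2 hwpos.le
          rw [div_mul_eq_mul_div] at this
          calc ε * l2norm w ≤ δ * m * l2norm w / (4 * l2norm w) := this
            _ = δ * m / 4 := by field_simp
        calc (2/δ) * (ε * l2norm w) ≤ (2/δ) * (δ * m / 4) := by
              apply mul_le_mul_of_nonneg_left h2 (by positivity)
          _ = m / 2 := by field_simp; ring
      have h2 : Pen (t • π₀) / C = t * m := by
        rw [hhom t π₀ hπ₀S, abs_of_nonneg ht0.le, hmP]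
        ring
      have h3 : g (t • π₀) < m := by
        apply max_lt
        · linarith
        · rw [h2]; nlinarith
      exact absurd (hminS _ htmem) (not_le.mpr h3)
  -- conclusion
  refine ⟨1/m, π₀, hπ₀S, by positivity, ?_, ?_, hfπ₀, ?_⟩
  · have h1 : (2/δ) * f π₀ ≤ m := le_max_left _ _
    rw [div_mul_eq_mul_div, one_mul, div_le_iff₀ hmpos]
    have h2 : (δ/2) * ((2/δ) * f π₀) = f π₀ := by field_simp
    nlinarith
  · have h1 : Pen π₀ / C ≤ m := le_max_right _ _
    rw [div_mul_eq_mul_div, one_mul, div_le_iff₀ hmpos]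
    have h2 : C * (Pen π₀ / C) = Pen π₀ := by field_simp
    nlinarith
  · intro β' π' hπ' hβ' hcon1 hcon2
    have hgle : β' * g π' ≤ 1 := by
      simp only [hgdef]
      rw [mul_max_of_nonneg _ _ hβ']
      apply max_le
      · calc β' * ((2/δ) * f π') = (2/δ) * (β' * f π') := by ring
          _ ≤ (2/δ) * (δ/2) := by
            apply mul_le_mul_of_nonneg_left hcon1 (by positivity)
          _ = 1 := by field_simp
      · calc β' * (Pen π' / C) = (β' * Pen π') / C := by ring
          _ ≤ C / C := by apply div_le_div_of_nonneg_right hcon2 hC.le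
          _ = 1 := div_self hC.ne'
    have hm' : m ≤ g π' := hminS π' hπ'
    have : β' * m ≤ 1 := le_trans (mul_le_mul_of_nonneg_left hm' hβ') hgle
    have : β' ≤ 1/m := by rw [le_div_iff₀ hmpos]; linarith
    linarith
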